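/- If T is a power bounded operator on a normed space X, then strong quasistability is equivalent to strong stability: liminf_{n→∞} ‖T^n x‖ = 0 for every x ∈ X if and only if lim_{n→∞} ‖T^n x‖ = 0 for every x ∈ X. -/
import Mathlib


/-- **Proposition 4.2.** If `T` is a power bounded operator on a normed space `X`, then
strong quasistability is equivalent to strong stability:
`liminf_n ‖T^n x‖ = 0` for every `x ∈ X` iff `lim_n ‖T^n x‖ = 0` for every `x ∈ X`. -/
theorem strong_quasistability_iff_strong_stability {𝕜 X : Type*} [RCLike 𝕜]
    [NormedAddCommGroup X] [NormedSpace 𝕜 X] (T : X →L[𝕜] X)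
    (hpb : ∃ C : ℝ, ∀ n : ℕ, ‖T ^ n‖ ≤ C) :
    (∀ x : X, Filter.liminf (fun n : ℕ => ‖(T ^ n) x‖) Filter.atTop = 0) ↔
      (∀ x : X, Filter.Tendsto (fun n : ℕ => ‖(T ^ n) x‖) Filter.atTop (nhds 0)) := by
  obtain ⟨C, hC⟩ := hpb
  set C' : ℝ := max C 1 with hC'def
  have hC'pos : 0 < C' := lt_of_lt_of_le one_pos (le_max_right _ _)
  have hC' : ∀ n, ‖T ^ n‖ ≤ C' := fun n => (hC n).trans (le_max_left _ _)
  constructor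
  · intro h x
    rw [Metric.tendsto_atTop]
    intro ε hε
    have hlim := h x
    have hbdd : Filter.IsCoboundedUnder (· ≥ ·) Filter.atTop
        (fun n : ℕ => ‖(T ^ n) x‖) :=
      Filter.isCoboundedUnder_ge_of_eventually_le Filter.atTop
        (Filter.Eventually.of_forall fun n => ContinuousLinearMap.le_opNorm_of_le (T ^ n)
          (le_refl ‖x‖) |>.trans (mul_le_mul_of_nonneg_right (hC' n) (norm_nonneg x)))
    have hlt : Filter.liminf (fun n : ℕ => ‖(T ^ n) x‖) Filter.atTop < ε / C' := by
      rw [hlim]; positivity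
    have hfreq := Filter.frequently_lt_of_liminf_lt hbdd hlt
    obtain ⟨N, -, hN⟩ := (Filter.frequently_atTop.mp hfreq) 0
    refine ⟨N, fun m hm => ?_⟩
    have : ‖(T ^ m) x‖ ≤ C' * ‖(T ^ N) x‖ := by
      have : (T ^ m) x = (T ^ (m - N)) ((T ^ N) x) := by
        rw [← ContinuousLinearMap.comp_apply, ← ContinuousLinearMap.mul_def,
          ← pow_add, Nat.sub_add_cancel hm]
      rw [this]
      calc ‖(T ^ (m - N)) ((T ^ N) x)‖ ≤ ‖T ^ (m - N)‖ * ‖(T ^ N) x‖ :=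
            ContinuousLinearMap.le_opNorm _ _
        _ ≤ C' * ‖(T ^ N) x‖ :=
            mul_le_mul_of_nonneg_right (hC' _) (norm_nonneg _)
    have hlt2 : ‖(T ^ m) x‖ < ε := by
      calc ‖(T ^ m) x‖ ≤ C' * ‖(T ^ N) x‖ := this
        _ < C' * (ε / C') := by
            exact mul_lt_mul_of_pos_left hN hC'pos
        _ = ε := by field_simp
    rw [Real.dist_eq, abs_sub_lt_iff]
    constructor <;> [linarith; linarith [norm_nonneg ((T ^ m) x)]]
  · intro h x
    exact (h x).liminf_eq
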